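/- arXiv:2009.05150 — 2 statements merged into one kernel-verified Lean document; each statement's English description precedes it below -/
import Mathlib

section
/- Let (X_i)_{i ∈ I_{∞,K}} be a jointly exchangeable mean-zero K-array, symmetric in the components of its index, with Hájek projections W_j = Σ_{k=1}^K h_k(U_j), h_k(u) = E[X_{(1,...,K)} | U_k = u]. Then the covariance matrix Σ = E[W_1 W_1^T] equals K² E[X̌_{(1,...,K)} X̌_{(1,K+1,...,2K)}^T], where X̌_i denotes the symmetrization X̌_{(i_1,...,i_K)} = (K!)^{-1} Σ_{permutations (i_1',...,i_K')} X_{(i_1',...,i_K')}. -/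
open MeasureTheory ProbabilityTheory
open scoped BigOperators ENNReal NNReal

lemma aux_map_pi {Ω : Type*} [MeasurableSpace Ω] (μ : Measure Ω) [IsProbabilityMeasure μ]
    {ι : Type*} (U : ι → Ω → ℝ) (hUmeas : ∀ A, Measurable (U A))
    (hUindep : iIndepFun U μ)
    (hUunif : ∀ A, Measure.map (U A) μ = volume.restrict (Set.Icc (0:ℝ) 1))
    {N : Type*} [Fintype N] (κ : N → ι) (hκ : Function.Injective κ) :
    Measure.map (fun ω (e : N) => U (κ e) ω) μ
      = Measure.pi (fun _ : N => volume.restrict (Set.Icc (0:ℝ) 1)) := by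
  classical
  haveI : IsProbabilityMeasure (volume.restrict (Set.Icc (0:ℝ) 1)) :=
    ⟨by simp [Real.volume_Icc]⟩
  have hmeas : Measurable (fun ω (e : N) => U (κ e) ω) :=
    measurable_pi_lambda _ fun e => hUmeas (κ e)
  refine (Measure.pi_eq fun s hs => ?_).symm
  rw [Measure.map_apply hmeas (MeasurableSet.univ_pi hs)]
  have hpre : (fun ω (e : N) => U (κ e) ω) ⁻¹' (Set.pi Set.univ s)
      = ⋂ e ∈ (Finset.univ : Finset N), U (κ e) ⁻¹' s e := by
    ext ω; simp [Set.mem_pi]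
  rw [hpre]
  rcases isEmpty_or_nonempty N with hN | hN
  · simp
  · set τ := Function.invFun κ with hτdef
    have hτ : ∀ e, τ (κ e) = e := fun e => Function.leftInverse_invFun hκ e
    have key := hUindep.measure_inter_preimage_eq_mul (Finset.univ.image κ)
      (sets := fun A => s (τ A)) (fun A _ => hs (τ A))
    have h1 : (⋂ A ∈ Finset.univ.image κ, U A ⁻¹' s (τ A))
        = ⋂ e ∈ (Finset.univ : Finset N), U (κ e) ⁻¹' s e := by
      rw [Finset.set_biInter_finset_image]
      exact Set.iInter₂_congr fun e _ => by rw [hτ]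
    rw [← h1, key, Finset.prod_image (fun e _ e' _ h => hκ h)]
    refine Finset.prod_congr rfl fun e _ => ?_
    rw [hτ, ← Measure.map_apply (hUmeas _) (hs e), hUunif]

lemma core_identity {Ω : Type*} [MeasurableSpace Ω] (μ : Measure Ω) [IsProbabilityMeasure μ]
    {T : Type*} [Fintype T] [DecidableEq T] (e₀ : T)
    {p : ℕ} (g : (T → ℝ) → Fin p → ℝ) (hg : Measurable g)
    (Z : Ω → ℝ) (hZ : Measurable Z)
    (V₀ V₁ : Ω → {e : T // e ≠ e₀} → ℝ) (hV₀ : Measurable V₀) (hV₁ : Measurable V₁)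
    (hmapZ : μ.map Z = volume.restrict (Set.Icc (0:ℝ) 1))
    (hmapV₀ : μ.map V₀ = Measure.pi fun _ : {e : T // e ≠ e₀} =>
        volume.restrict (Set.Icc (0:ℝ) 1))
    (hmapV₁ : μ.map V₁ = Measure.pi fun _ : {e : T // e ≠ e₀} =>
        volume.restrict (Set.Icc (0:ℝ) 1))
    (hindepZ : IndepFun Z (fun ω => (V₀ ω, V₁ ω)) μ)
    (hindep01 : IndepFun V₀ V₁ μ)
    (Y₀ Y₁ : Ω → Fin p → ℝ)
    (hY₀ : ∀ ω, Y₀ ω = g (fun e => if h : e = e₀ then Z ω else V₀ ω ⟨e, h⟩))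
    (hY₁ : ∀ ω, Y₁ ω = g (fun e => if h : e = e₀ then Z ω else V₁ ω ⟨e, h⟩))
    (hY₀L2 : MemLp Y₀ 2 μ) (hY₁L2 : MemLp Y₁ 2 μ)
    (j l : Fin p) :
    ∫ ω, (μ[Y₀ | MeasurableSpace.comap Z (borel ℝ)]) ω j *
         (μ[Y₀ | MeasurableSpace.comap Z (borel ℝ)]) ω l ∂μ
      = ∫ ω, Y₀ ω j * Y₁ ω l ∂μ := by
  classical
  set u01 : Measure ℝ := volume.restrict (Set.Icc (0:ℝ) 1) with hu01
  haveI : IsProbabilityMeasure u01 := ⟨by simp [hu01, Real.volume_Icc]⟩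
  set ρ : Measure ({e : T // e ≠ e₀} → ℝ) := Measure.pi fun _ => u01 with hρ
  haveI : IsProbabilityMeasure ρ := by rw [hρ]; infer_instance
  set G : ℝ × ({e : T // e ≠ e₀} → ℝ) → Fin p → ℝ :=
    fun q => g (fun e => if h : e = e₀ then q.1 else q.2 ⟨e, h⟩) with hGdef
  have hGmeas : Measurable G := by
    refine hg.comp (measurable_pi_lambda _ fun e => ?_)
    by_cases h : e = e₀
    · simp only [dif_pos h]; exact measurable_fst
    · simp only [dif_neg h]; exact (measurable_pi_apply _).comp measurable_snd
  have hGsm : StronglyMeasurable G := hGmeas.stronglyMeasurable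
  have hY₀G : ∀ ω, Y₀ ω = G (Z ω, V₀ ω) := fun ω => hY₀ ω
  have hY₁G : ∀ ω, Y₁ ω = G (Z ω, V₁ ω) := fun ω => hY₁ ω
  have hpair01 : Measurable (fun ω => (V₀ ω, V₁ ω)) := hV₀.prodMk hV₁
  have htriplemeas : Measurable (fun ω => (Z ω, V₀ ω, V₁ ω)) := hZ.prodMk hpair01
  have hZV₀ : Measurable (fun ω => (Z ω, V₀ ω)) := hZ.prodMk hV₀
  have hmapPair : μ.map (fun ω => (V₀ ω, V₁ ω)) = ρ.prod ρ := by
    rw [(indepFun_iff_map_prod_eq_prod_map_map hV₀.aemeasurable hV₁.aemeasurable).mp hindep01,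
      hmapV₀, hmapV₁]
  have hmapTriple : μ.map (fun ω => (Z ω, V₀ ω, V₁ ω)) = u01.prod (ρ.prod ρ) := by
    rw [(indepFun_iff_map_prod_eq_prod_map_map hZ.aemeasurable hpair01.aemeasurable).mp hindepZ,
      hmapZ, hmapPair]
  have hindepZ0 : IndepFun Z V₀ μ := hindepZ.comp measurable_id measurable_fst
  have hmapZ0 : μ.map (fun ω => (Z ω, V₀ ω)) = u01.prod ρ := by
    rw [(indepFun_iff_map_prod_eq_prod_map_map hZ.aemeasurable hV₀.aemeasurable).mp hindepZ0,
      hmapZ, hmapV₀]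
  have hY₀int : Integrable Y₀ μ := hY₀L2.integrable one_le_two
  have hGint : Integrable G (u01.prod ρ) := by
    rw [← hmapZ0]
    refine (integrable_map_measure hGsm.aestronglyMeasurable hZV₀.aemeasurable).mpr ?_
    exact hY₀int.congr (Filter.Eventually.of_forall fun ω => (hY₀G ω))
  set Φ : ℝ → Fin p → ℝ := fun u => ∫ y, G (u, y) ∂ρ with hΦdef
  have hΦsm : StronglyMeasurable Φ := hGsm.integral_prod_right'
  have hΦint : Integrable Φ u01 := hGint.integral_prod_left
  have hmeq : MeasurableSpace.comap Z (borel ℝ) = MeasurableSpace.comap Z inferInstance :=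
    congrArg (MeasurableSpace.comap Z) (BorelSpace.measurable_eq (α := ℝ)).symm
  have hm : MeasurableSpace.comap Z (borel ℝ) ≤ (inferInstance : MeasurableSpace Ω) := by
    rw [hmeq]; exact hZ.comap_le
  haveI : SigmaFinite (μ.trim hm) := by
    haveI : IsFiniteMeasure (μ.trim hm) := isFiniteMeasure_trim hm
    infer_instance
  have hΦZint : Integrable (fun ω => Φ (Z ω)) μ := by
    have : Integrable Φ (μ.map Z) := by rwa [hmapZ]
    exact (integrable_map_measure hΦsm.aestronglyMeasurable hZ.aemeasurable).mp this
  have hCE : (μ[Y₀ | MeasurableSpace.comap Z (borel ℝ)]) =ᵐ[μ] fun ω => Φ (Z ω) := by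
    refine (ae_eq_condExp_of_forall_setIntegral_eq hm hY₀int ?_ ?_ ?_).symm
    · intro s _ _; exact hΦZint.integrableOn
    · intro s hs _
      obtain ⟨B, hB, rfl⟩ := MeasurableSpace.measurableSet_comap.mp hs
      have hB' : MeasurableSet B := by
        rw [BorelSpace.measurable_eq (α := ℝ)]; exact hB
      have e1 : ∫ ω in Z ⁻¹' B, Φ (Z ω) ∂μ = ∫ u in B, Φ u ∂u01 := by
        rw [← hmapZ, setIntegral_map hB' hΦsm.aestronglyMeasurable hZ.aemeasurable]
      have hpreim : (fun ω => (Z ω, V₀ ω)) ⁻¹' (B ×ˢ Set.univ) = Z ⁻¹' B := by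
        ext ω; simp
      have e2 : ∫ ω in Z ⁻¹' B, Y₀ ω ∂μ = ∫ q in B ×ˢ Set.univ, G q ∂(u01.prod ρ) := by
        simp only [hY₀G]
        rw [← hmapZ0, setIntegral_map (hB'.prod MeasurableSet.univ)
          hGsm.aestronglyMeasurable hZV₀.aemeasurable, hpreim]
      have e3 : ∫ q in B ×ˢ Set.univ, G q ∂(u01.prod ρ) = ∫ u in B, Φ u ∂u01 := by
        have hre : (u01.prod ρ).restrict (B ×ˢ Set.univ) = (u01.restrict B).prod ρ := by
          rw [← Measure.prod_restrict, Measure.restrict_univ]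
        have hint' : Integrable G ((u01.restrict B).prod ρ) := by
          rw [← hre]; exact hGint.integrableOn
        rw [hre, integral_prod _ hint']
      rw [e1, e2, e3]
    · have hZm : Measurable[MeasurableSpace.comap Z (borel ℝ)] Z :=
        Measurable.of_comap_le hmeq.symm.le
      exact StronglyMeasurable.aestronglyMeasurable (hΦsm.comp_measurable hZm)
  have hcongr : ∫ ω, (μ[Y₀ | MeasurableSpace.comap Z (borel ℝ)]) ω j *
      (μ[Y₀ | MeasurableSpace.comap Z (borel ℝ)]) ω l ∂μ
      = ∫ ω, Φ (Z ω) j * Φ (Z ω) l ∂μ :=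
    integral_congr_ae (hCE.mono fun ω h => by dsimp only; rw [h])
  have hΦj : StronglyMeasurable fun u => Φ u j :=
    (continuous_apply j).comp_stronglyMeasurable hΦsm
  have hΦl : StronglyMeasurable fun u => Φ u l :=
    (continuous_apply l).comp_stronglyMeasurable hΦsm
  have hLHS2 : ∫ ω, Φ (Z ω) j * Φ (Z ω) l ∂μ = ∫ u, Φ u j * Φ u l ∂u01 := by
    rw [← hmapZ]
    exact (integral_map hZ.aemeasurable (hΦj.mul hΦl).aestronglyMeasurable).symm
  have hprodInt : Integrable (fun ω => Y₀ ω j * Y₁ ω l) μ := by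
    have h0 : MemLp (fun ω => Y₀ ω j) 2 μ :=
      (ContinuousLinearMap.proj (R := ℝ) (φ := fun _ : Fin p => ℝ) j).comp_memLp' hY₀L2
    have h1 : MemLp (fun ω => Y₁ ω l) 2 μ :=
      (ContinuousLinearMap.proj (R := ℝ) (φ := fun _ : Fin p => ℝ) l).comp_memLp' hY₁L2
    have hpqr : (1 : ℝ≥0∞) / 1 = 1 / 2 + 1 / 2 := by
      rw [ENNReal.div_add_div_same, div_one, one_add_one_eq_two]
      exact (ENNReal.div_self two_ne_zero ENNReal.ofNat_ne_top).symm
    exact ((h1.smul h0 (hpqr := ⟨by rw [inv_one]; exact ENNReal.inv_two_add_inv_two⟩)).integrable le_rfl).congr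
      (Filter.Eventually.of_forall fun ω => by
        simp [Pi.smul_apply', smul_eq_mul, mul_comm])
  set F : ℝ × (({e : T // e ≠ e₀} → ℝ) × ({e : T // e ≠ e₀} → ℝ)) → ℝ :=
    fun q => G (q.1, q.2.1) j * G (q.1, q.2.2) l with hF
  have hFsm : StronglyMeasurable F := by
    have h1 : Measurable fun q : ℝ × (({e : T // e ≠ e₀} → ℝ) × ({e : T // e ≠ e₀} → ℝ)) =>
        G (q.1, q.2.1) j :=
      (measurable_pi_apply j).comp (hGmeas.comp (measurable_fst.prodMk
        (measurable_fst.comp measurable_snd)))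
    have h2 : Measurable fun q : ℝ × (({e : T // e ≠ e₀} → ℝ) × ({e : T // e ≠ e₀} → ℝ)) =>
        G (q.1, q.2.2) l :=
      (measurable_pi_apply l).comp (hGmeas.comp (measurable_fst.prodMk
        (measurable_snd.comp measurable_snd)))
    exact (h1.mul h2).stronglyMeasurable
  have hFint : Integrable F (u01.prod (ρ.prod ρ)) := by
    rw [← hmapTriple]
    refine (integrable_map_measure hFsm.aestronglyMeasurable htriplemeas.aemeasurable).mpr ?_
    exact hprodInt.congr (Filter.Eventually.of_forall fun ω => by
      simp only [Function.comp_apply, hF]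
      rw [hY₀G, hY₁G])
  have hRHS : ∫ ω, Y₀ ω j * Y₁ ω l ∂μ = ∫ u, Φ u j * Φ u l ∂u01 := by
    have step1 : ∫ ω, Y₀ ω j * Y₁ ω l ∂μ = ∫ q, F q ∂(u01.prod (ρ.prod ρ)) := by
      rw [← hmapTriple, integral_map htriplemeas.aemeasurable hFsm.aestronglyMeasurable]
      exact integral_congr_ae (Filter.Eventually.of_forall fun ω => by
        simp only [hF]; rw [hY₀G, hY₁G])
    rw [step1, integral_prod _ hFint]
    refine integral_congr_ae ?_
    have hsec : ∀ᵐ u ∂u01, Integrable (fun y => G (u, y)) ρ := hGint.prod_right_ae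
    filter_upwards [hsec] with u hu
    have hmul : ∫ w, F (u, w) ∂(ρ.prod ρ)
        = (∫ y, G (u, y) j ∂ρ) * (∫ y, G (u, y) l ∂ρ) :=
      integral_prod_mul (μ := ρ) (ν := ρ) (fun y => G (u, y) j) (fun y => G (u, y) l)
    rw [hmul]
    have hj' : ∫ y, G (u, y) j ∂ρ = Φ u j :=
      ContinuousLinearMap.integral_comp_comm
        (ContinuousLinearMap.proj (R := ℝ) (φ := fun _ : Fin p => ℝ) j) hu
    have hl' : ∫ y, G (u, y) l ∂ρ = Φ u l :=
      ContinuousLinearMap.integral_comp_comm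
        (ContinuousLinearMap.proj (R := ℝ) (φ := fun _ : Fin p => ℝ) l) hu
    rw [hj', hl']
  rw [hcongr, hLHS2, hRHS]

/-- Identification of the Hájek-projection covariance for jointly exchangeable arrays with
Silverman's (1976) expression.  The array `X_i = g((U_{{i⊙e}⁺})_{e∈{0,1}^K\{0}})` is
generated from i.i.d. `U[0,1]` latent variables indexed by finite subsets of ℕ (the value
of `g` at `e` being the latent variable attached to the image `{i⊙e}⁺ = i(e)` of the index
tuple on the support of `e`); `X` is mean zero, square integrable and symmetric in the
components of its index.  With `W₁ = Σ_{k} E[X_{(1,…,K)} | U_k = ·](U_1)`, realized as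
`Σ_k E[X ∘ (swap of positions 0 and k applied to (1,…,K)) | σ(U_{{1}})]`, and the
symmetrization `X̌_i = (K!)⁻¹ Σ_σ X_{i∘σ}`, one has, entrywise,
`E[W₁ W₁ᵀ] = K² E[X̌_{(1,…,K)} X̌_{(1,K+1,…,2K)}ᵀ]`. -/
theorem stmt_9 {Ω : Type*} [MeasurableSpace Ω] (μ : Measure Ω) [IsProbabilityMeasure μ]
    (K p : ℕ) (hK : 0 < K)
    (U : Finset ℕ → Ω → ℝ)
    (hUmeas : ∀ A, Measurable (U A))
    (hUindep : iIndepFun U μ)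
    (hUunif : ∀ A, Measure.map (U A) μ = volume.restrict (Set.Icc (0 : ℝ) 1))
    (g : ({e : Finset (Fin K) // e ≠ ∅} → ℝ) → (Fin p → ℝ)) (hg : Measurable g)
    (X : (Fin K → ℕ) → Ω → (Fin p → ℝ))
    (hXdef : ∀ i, X i = fun ω => g (fun e => U (e.1.image i) ω))
    (hXL2 : ∀ i, MemLp (X i) 2 μ)
    (hXmean : ∀ i, Function.Injective i → (∫ ω, X i ω ∂μ) = 0)
    (hXsym : ∀ i (σ : Equiv.Perm (Fin K)), X (i ∘ σ) = X i) :
    ∀ j l : Fin p,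
      (∫ ω,
        ((∑ k : Fin K,
          μ[X (fun s => ((Equiv.swap (⟨0, hK⟩ : Fin K) k) s : Fin K).val + 1) |
            MeasurableSpace.comap (U {1}) (borel ℝ)]) ω j) *
        ((∑ k : Fin K,
          μ[X (fun s => ((Equiv.swap (⟨0, hK⟩ : Fin K) k) s : Fin K).val + 1) |
            MeasurableSpace.comap (U {1}) (borel ℝ)]) ω l) ∂μ)
      = (K : ℝ) ^ 2 *
        ∫ ω,
          (((K.factorial : ℝ)⁻¹ •
              ∑ σ : Equiv.Perm (Fin K), X ((fun s : Fin K => (s : ℕ) + 1) ∘ σ) ω) j) *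
          (((K.factorial : ℝ)⁻¹ •
              ∑ σ : Equiv.Perm (Fin K),
                X ((fun s : Fin K => if (s : ℕ) = 0 then 1 else K + (s : ℕ)) ∘ σ) ω) l)
          ∂μ := by
  classical
  intro j l
  set i₀ : Fin K → ℕ := fun s => (s : ℕ) + 1 with hi₀
  set i₁ : Fin K → ℕ := fun s => if (s : ℕ) = 0 then 1 else K + (s : ℕ) with hi₁
  have hi₀inj : Function.Injective i₀ := by
    intro a b h
    simp only [hi₀] at h
    exact Fin.ext (by omega)
  have hi₁inj : Function.Injective i₁ := by
    intro a b h
    simp only [hi₁] at h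
    refine Fin.ext ?_
    split_ifs at h <;> omega
  set e₀ : {e : Finset (Fin K) // e ≠ ∅} :=
    ⟨{(⟨0, hK⟩ : Fin K)}, Finset.singleton_ne_empty _⟩ with he₀
  set V₀ : Ω → {e : {e : Finset (Fin K) // e ≠ ∅} // e ≠ e₀} → ℝ :=
    fun ω e => U (e.1.1.image i₀) ω with hV₀def
  set V₁ : Ω → {e : {e : Finset (Fin K) // e ≠ ∅} // e ≠ e₀} → ℝ :=
    fun ω e => U (e.1.1.image i₁) ω with hV₁def
  have hV₀meas : Measurable V₀ := measurable_pi_lambda _ fun e => hUmeas _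
  have hV₁meas : Measurable V₁ := measurable_pi_lambda _ fun e => hUmeas _
  have himg₀inj : Function.Injective
      (fun e : {e : {e : Finset (Fin K) // e ≠ ∅} // e ≠ e₀} => e.1.1.image i₀) := by
    intro a b h
    dsimp only at h
    exact Subtype.ext (Subtype.ext (Finset.image_injective hi₀inj h))
  have himg₁inj : Function.Injective
      (fun e : {e : {e : Finset (Fin K) // e ≠ ∅} // e ≠ e₀} => e.1.1.image i₁) := by
    intro a b h
    dsimp only at h
    exact Subtype.ext (Subtype.ext (Finset.image_injective hi₁inj h))
  have himage₀ : (({(⟨0, hK⟩ : Fin K)} : Finset (Fin K)).image i₀) = ({1} : Finset ℕ) := by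
    simp [hi₀]
  have himage₁ : (({(⟨0, hK⟩ : Fin K)} : Finset (Fin K)).image i₁) = ({1} : Finset ℕ) := by
    simp [hi₁]
  have hκ₀ne : ∀ e : {e : {e : Finset (Fin K) // e ≠ ∅} // e ≠ e₀},
      e.1.1.image i₀ ≠ ({1} : Finset ℕ) := by
    intro e h
    apply e.2
    apply Subtype.ext
    exact Finset.image_injective hi₀inj (h.trans himage₀.symm)
  have hκ₁ne : ∀ e : {e : {e : Finset (Fin K) // e ≠ ∅} // e ≠ e₀},
      e.1.1.image i₁ ≠ ({1} : Finset ℕ) := by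
    intro e h
    apply e.2
    apply Subtype.ext
    exact Finset.image_injective hi₁inj (h.trans himage₁.symm)
  have hmem₀ : ∀ (e : Finset (Fin K)) (m : ℕ), m ∈ e.image i₀ → 1 ≤ m ∧ m ≤ K := by
    intro e m hm
    rw [Finset.mem_image] at hm
    obtain ⟨s, _, rfl⟩ := hm
    have := s.isLt
    simp only [hi₀]
    omega
  have hmem₁ : ∀ (e : Finset (Fin K)) (m : ℕ), m ∈ e.image i₁ → m = 1 ∨ K + 1 ≤ m := by
    intro e m hm
    rw [Finset.mem_image] at hm
    obtain ⟨s, _, rfl⟩ := hm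
    simp only [hi₁]
    split_ifs <;> omega
  have hκdisj : ∀ (a b : {e : {e : Finset (Fin K) // e ≠ ∅} // e ≠ e₀}),
      a.1.1.image i₀ ≠ b.1.1.image i₁ := by
    intro a b h
    apply hκ₀ne a
    have hne : (a.1.1.image i₀).Nonempty :=
      (Finset.nonempty_iff_ne_empty.mpr a.1.2).image _
    refine (Finset.Nonempty.subset_singleton_iff hne).mp ?_
    intro m hm
    have h1 := hmem₀ a.1.1 m hm
    have h2 := hmem₁ b.1.1 m (h ▸ hm)
    exact Finset.mem_singleton.mpr (by rcases h2 with h2 | h2 <;> omega)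
  -- independence
  have hdisjZ : Disjoint ({({1} : Finset ℕ)} : Finset (Finset ℕ))
      ((Finset.univ.image (fun e : {e : {e : Finset (Fin K) // e ≠ ∅} // e ≠ e₀} =>
          e.1.1.image i₀)) ∪
       (Finset.univ.image (fun e : {e : {e : Finset (Fin K) // e ≠ ∅} // e ≠ e₀} =>
          e.1.1.image i₁))) := by
    rw [Finset.disjoint_left]
    intro A hA hA'
    rw [Finset.mem_singleton] at hA
    subst hA
    rcases Finset.mem_union.mp hA' with h | h <;>
      · rw [Finset.mem_image] at h
        obtain ⟨e, _, he⟩ := h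
        first
          | exact hκ₀ne e he
          | exact hκ₁ne e he
  have hdisj01 : Disjoint
      (Finset.univ.image (fun e : {e : {e : Finset (Fin K) // e ≠ ∅} // e ≠ e₀} =>
          e.1.1.image i₀))
      (Finset.univ.image (fun e : {e : {e : Finset (Fin K) // e ≠ ∅} // e ≠ e₀} =>
          e.1.1.image i₁)) := by
    rw [Finset.disjoint_left]
    intro A hA hA'
    rw [Finset.mem_image] at hA hA'
    obtain ⟨a, _, ha⟩ := hA
    obtain ⟨b, _, hb⟩ := hA'
    exact hκdisj a b (ha.trans hb.symm)
  have hindepZpair : IndepFun (U {1}) (fun ω => (V₀ ω, V₁ ω)) μ := by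
    have hbig := hUindep.indepFun_finset {({1} : Finset ℕ)} _ hdisjZ hUmeas
    have hL : Measurable (fun z : ((A : ({({1} : Finset ℕ)} : Finset (Finset ℕ))) → ℝ) =>
        z ⟨{1}, Finset.mem_singleton_self _⟩) := measurable_pi_apply _
    have hR : Measurable (fun z : ((A :
        ((Finset.univ.image (fun e : {e : {e : Finset (Fin K) // e ≠ ∅} // e ≠ e₀} =>
            e.1.1.image i₀)) ∪
         (Finset.univ.image (fun e : {e : {e : Finset (Fin K) // e ≠ ∅} // e ≠ e₀} =>
            e.1.1.image i₁)) : Finset (Finset ℕ))) → ℝ) =>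
        ((fun e : {e : {e : Finset (Fin K) // e ≠ ∅} // e ≠ e₀} =>
            z ⟨e.1.1.image i₀, Finset.mem_union_left _
              (Finset.mem_image_of_mem _ (Finset.mem_univ e))⟩),
         (fun e : {e : {e : Finset (Fin K) // e ≠ ∅} // e ≠ e₀} =>
            z ⟨e.1.1.image i₁, Finset.mem_union_right _
              (Finset.mem_image_of_mem _ (Finset.mem_univ e))⟩))) :=
      (measurable_pi_lambda _ fun e => measurable_pi_apply _).prodMk
        (measurable_pi_lambda _ fun e => measurable_pi_apply _)
    exact hbig.comp hL hR
  have hindep01 : IndepFun V₀ V₁ μ := by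
    have hbig := hUindep.indepFun_finset _ _ hdisj01 hUmeas
    have hL : Measurable (fun z : ((A :
        ((Finset.univ.image (fun e : {e : {e : Finset (Fin K) // e ≠ ∅} // e ≠ e₀} =>
            e.1.1.image i₀)) : Finset (Finset ℕ))) → ℝ) =>
        (fun e : {e : {e : Finset (Fin K) // e ≠ ∅} // e ≠ e₀} =>
            z ⟨e.1.1.image i₀, Finset.mem_image_of_mem _ (Finset.mem_univ e)⟩)) :=
      measurable_pi_lambda _ fun e => measurable_pi_apply _
    have hR : Measurable (fun z : ((A :
        ((Finset.univ.image (fun e : {e : {e : Finset (Fin K) // e ≠ ∅} // e ≠ e₀} =>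
            e.1.1.image i₁)) : Finset (Finset ℕ))) → ℝ) =>
        (fun e : {e : {e : Finset (Fin K) // e ≠ ∅} // e ≠ e₀} =>
            z ⟨e.1.1.image i₁, Finset.mem_image_of_mem _ (Finset.mem_univ e)⟩)) :=
      measurable_pi_lambda _ fun e => measurable_pi_apply _
    exact hbig.comp hL hR
  -- laws
  have hmapV₀ : μ.map V₀ = Measure.pi
      (fun _ : {e : {e : Finset (Fin K) // e ≠ ∅} // e ≠ e₀} =>
        volume.restrict (Set.Icc (0:ℝ) 1)) :=
    aux_map_pi μ U hUmeas hUindep hUunif _ himg₀inj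
  have hmapV₁ : μ.map V₁ = Measure.pi
      (fun _ : {e : {e : Finset (Fin K) // e ≠ ∅} // e ≠ e₀} =>
        volume.restrict (Set.Icc (0:ℝ) 1)) :=
    aux_map_pi μ U hUmeas hUindep hUunif _ himg₁inj
  -- Y equations
  have hY₀eq : ∀ ω, X i₀ ω = g (fun e => if h : e = e₀ then U {1} ω else V₀ ω ⟨e, h⟩) := by
    intro ω
    rw [hXdef]
    dsimp only
    refine congrArg g ?_
    funext e
    by_cases h : e = e₀
    · rw [dif_pos h, h]
      show U (e₀.1.image i₀) ω = U {1} ω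
      rw [show e₀.1 = ({(⟨0, hK⟩ : Fin K)} : Finset (Fin K)) from rfl, himage₀]
    · rw [dif_neg h]
  have hY₁eq : ∀ ω, X i₁ ω = g (fun e => if h : e = e₀ then U {1} ω else V₁ ω ⟨e, h⟩) := by
    intro ω
    rw [hXdef]
    dsimp only
    refine congrArg g ?_
    funext e
    by_cases h : e = e₀
    · rw [dif_pos h, h]
      show U (e₀.1.image i₁) ω = U {1} ω
      rw [show e₀.1 = ({(⟨0, hK⟩ : Fin K)} : Finset (Fin K)) from rfl, himage₁]
    · rw [dif_neg h]
  have hcore := core_identity μ e₀ g hg (U {1}) (hUmeas {1}) V₀ V₁ hV₀meas hV₁meas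
    (hUunif {1}) hmapV₀ hmapV₁ hindepZpair hindep01 (X i₀) (X i₁) hY₀eq hY₁eq
    (hXL2 i₀) (hXL2 i₁) j l
  -- reduce the left-hand side
  have hXswap : ∀ k : Fin K,
      X (fun s => ((Equiv.swap (⟨0, hK⟩ : Fin K) k) s : Fin K).val + 1) = X i₀ :=
    fun k => hXsym i₀ (Equiv.swap (⟨0, hK⟩ : Fin K) k)
  simp only [hXswap, Finset.sum_const, Finset.card_univ, Fintype.card_fin]
  simp only [hXsym, Fintype.card_perm, Pi.smul_apply, nsmul_eq_mul, smul_eq_mul,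
    Fintype.card_fin]
  simp only [Finset.sum_apply, Finset.sum_const, Finset.card_univ, Fintype.card_perm,
    Fintype.card_fin, nsmul_eq_mul]
  have hfacne : ((K.factorial : ℝ)) ≠ 0 := Nat.cast_ne_zero.mpr K.factorial_ne_zero
  simp only [inv_mul_cancel_left₀ hfacne]
  simp only [mul_mul_mul_comm, ← pow_two]
  rw [integral_const_mul, hcore]
end

section
/- Let X be an N×p real matrix with rows indexed by a finite set of size N, and for θ ∈ ℝ^p let ‖Xθ‖_{N,2}² = N^{-1} Σ_i (x_i^T θ)². Define the s-sparse minimal singular value φ_min(s) = min{‖Xθ‖_{N,2} : ‖θ‖_0 ≤ s, ‖θ‖ = 1} and ρ̂ = max_{1≤ℓ≤p} N^{-1} Σ_i (x_i^ℓ)². Suppose φ_min(s) ≥ φ_1 > 0 for some 2 ≤ s ≤ p. Then for all θ ∈ ℝ^p: ‖Xθ‖²_{N,2} ≥ φ_1² ‖θ‖² − ‖θ‖_1² ρ̂ / (s−1). Consequently, for any c_0 ≥ 1 and any positive integer s_1 ≤ (s−1)φ_1²/(2(1+c_0)² ρ̂), the restricted eigenvalue satisfies κ(s_1, c_0) ≥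 φ_1/√2. -/
open scoped BigOperators

lemma pi_sum_prod {s p : ℕ} (h : Fin s → Fin p → ℝ) :
    ∑ w : Fin s → Fin p, ∏ a, h a (w a) = ∏ a, ∑ j, h a j := by
  rw [Finset.prod_univ_sum, Fintype.piFinset_univ]

lemma cond_exp_one {s p : ℕ} (μ F : Fin p → ℝ) (hμ : ∑ j, μ j = 1) (ι : Fin s) :
    ∑ w : Fin s → Fin p, (∏ a, μ (w a)) * F (w ι) = ∑ j, μ j * F j := by
  have key : ∀ w : Fin s → Fin p,
      (∏ a, μ (w a)) * F (w ι) = ∏ a, (μ (w a) * (if a = ι then F (w a) else 1)) := by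
    intro w
    rw [Finset.prod_mul_distrib, Finset.prod_ite_eq']
    simp
  simp_rw [key]
  rw [pi_sum_prod (fun a j => μ j * (if a = ι then F j else 1))]
  have h2 : ∀ a : Fin s, (∑ j, μ j * (if a = ι then F j else 1)) =
      if a = ι then (∑ j, μ j * F j) else 1 := by
    intro a
    by_cases h : a = ι <;> simp [h, hμ]
  simp_rw [h2]
  rw [Finset.prod_ite_eq']
  simp

lemma cond_exp_two {s p : ℕ} (μ F G : Fin p → ℝ) (hμ : ∑ j, μ j = 1) {ι ι' : Fin s}
    (hne : ι ≠ ι') :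
    ∑ w : Fin s → Fin p, (∏ a, μ (w a)) * (F (w ι) * G (w ι'))
      = (∑ j, μ j * F j) * (∑ j, μ j * G j) := by
  have key : ∀ w : Fin s → Fin p,
      (∏ a, μ (w a)) * (F (w ι) * G (w ι'))
        = ∏ a, (μ (w a) * ((if a = ι then F (w a) else 1) * (if a = ι' then G (w a) else 1))) := by
    intro w
    simp_rw [Finset.prod_mul_distrib, Finset.prod_ite_eq']
    simp [mul_assoc]
  simp_rw [key]
  rw [pi_sum_prod (fun a j => μ j * ((if a = ι then F j else 1) * (if a = ι' then G j else 1)))]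
  have h2 : ∀ a : Fin s, (∑ j, μ j * ((if a = ι then F j else 1) * (if a = ι' then G j else 1))) =
      (if a = ι then (∑ j, μ j * F j) else 1) * (if a = ι' then (∑ j, μ j * G j) else 1) := by
    intro a
    by_cases h : a = ι
    · have h' : a ≠ ι' := fun h' => hne (h.symm.trans h')
      simp [h, h', hμ, hne, Ne.symm hne]
    · by_cases h' : a = ι' <;> simp [h, h', hμ, hne, Ne.symm hne]
  simp_rw [h2]
  rw [Finset.prod_mul_distrib, Finset.prod_ite_eq', Finset.prod_ite_eq']
  simp

lemma cond_exp_pair {s p : ℕ} (μ F : Fin p → ℝ) (hμ : ∑ j, μ j = 1) (ι ι' : Fin s) :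
    ∑ w : Fin s → Fin p, (∏ a, μ (w a)) * (F (w ι) * F (w ι'))
      = if ι = ι' then ∑ j, μ j * F j ^ 2 else (∑ j, μ j * F j) ^ 2 := by
  by_cases h : ι = ι'
  · subst h
    rw [if_pos rfl, ← cond_exp_one μ (fun j => F j ^ 2) hμ ι]
    simp [sq]
  · rw [if_neg h, cond_exp_two μ F F hμ h, sq]

lemma master {s p : ℕ} (μ : Fin p → ℝ) (hμ : ∑ j, μ j = 1) (f : Fin p → ℝ) :
    ∑ w : Fin s → Fin p, (∏ a, μ (w a)) * (∑ ι, f (w ι)) ^ 2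
      = s * (∑ j, μ j * f j ^ 2) + ((s : ℝ) ^ 2 - s) * (∑ j, μ j * f j) ^ 2 := by
  have expand : ∀ w : Fin s → Fin p, (∏ a, μ (w a)) * (∑ ι, f (w ι)) ^ 2
      = ∑ ι : Fin s, ∑ ι' : Fin s, (∏ a, μ (w a)) * (f (w ι) * f (w ι')) := by
    intro w
    rw [sq, Finset.sum_mul_sum]
    rw [Finset.mul_sum]
    refine Finset.sum_congr rfl fun ι _ => ?_
    rw [Finset.mul_sum]
  simp_rw [expand]
  rw [Finset.sum_comm]
  have : ∀ ι : Fin s, ∑ w : Fin s → Fin p, ∑ ι' : Fin s, (∏ a, μ (w a)) * (f (w ι) * f (w ι'))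
      = ∑ ι' : Fin s, if ι = ι' then ∑ j, μ j * f j ^ 2 else (∑ j, μ j * f j) ^ 2 := by
    intro ι
    rw [Finset.sum_comm]
    exact Finset.sum_congr rfl fun ι' _ => cond_exp_pair μ f hμ ι ι'
  simp_rw [this]
  have h3 : ∀ ι : Fin s, (∑ ι' : Fin s, if ι = ι' then (∑ j, μ j * f j ^ 2) else (∑ j, μ j * f j) ^ 2)
      = (∑ j, μ j * f j) ^ 2 * s + ((∑ j, μ j * f j ^ 2) - (∑ j, μ j * f j) ^ 2) := by
    intro ι
    have : ∀ ι' : Fin s, (if ι = ι' then (∑ j, μ j * f j ^ 2) else (∑ j, μ j * f j) ^ 2)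
        = (∑ j, μ j * f j) ^ 2 + (if ι = ι' then (∑ j, μ j * f j ^ 2) - (∑ j, μ j * f j) ^ 2 else 0) := by
      intro ι'
      split <;> ring
    simp_rw [this, Finset.sum_add_distrib, Finset.sum_ite_eq]
    simp
    ring
  simp_rw [h3]
  simp
  ring

lemma part1_norm {N p s : ℕ} (hs2 : 2 ≤ s) (x : Fin N → Fin p → ℝ) (φ₁ ρ : ℝ)
    (hρ : ∀ j : Fin p, (N : ℝ)⁻¹ * ∑ i, (x i j) ^ 2 ≤ ρ)
    (hφ' : ∀ v : Fin p → ℝ, Set.ncard {j | v j ≠ 0} ≤ s →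
      φ₁ ^ 2 * (∑ j, v j ^ 2) ≤ (N : ℝ)⁻¹ * ∑ i, (∑ j, x i j * v j) ^ 2)
    (hφ₁ : 0 ≤ φ₁)
    (θ : Fin p → ℝ) (hθ : ∑ j, |θ j| = 1) :
    φ₁ ^ 2 * (∑ j, θ j ^ 2) - ρ / ((s : ℝ) - 1)
      ≤ (N : ℝ)⁻¹ * ∑ i, (∑ j, x i j * θ j) ^ 2 := by
  classical
  set μ : Fin p → ℝ := fun j => |θ j| with hμdef
  set σ : Fin p → ℝ := fun j => if θ j < 0 then -1 else 1 with hσdef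
  have hμ0 : ∀ j, 0 ≤ μ j := fun j => abs_nonneg _
  have hμ1 : ∑ j, μ j = 1 := hθ
  have hσμ : ∀ j, σ j * μ j = θ j := by
    intro j
    by_cases h : θ j < 0
    · simp [hσdef, hμdef, abs_of_neg h, h]
    · simp [hσdef, hμdef, abs_of_nonneg (not_lt.mp h), h]
  have hσsq : ∀ j, σ j ^ 2 = 1 := by
    intro j
    by_cases h : θ j < 0 <;> simp [hσdef, h]
  -- the random sparse vector
  set V : (Fin s → Fin p) → Fin p → ℝ :=
    fun w j => σ j * ∑ ι, (if w ι = j then (1 : ℝ) else 0) with hVdef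
  have hP0 : ∀ w : Fin s → Fin p, 0 ≤ ∏ a, μ (w a) :=
    fun w => Finset.prod_nonneg fun a _ => hμ0 _
  -- support bound
  have hsupp : ∀ w : Fin s → Fin p, Set.ncard {j | V w j ≠ 0} ≤ s := by
    intro w
    have hsub : {j | V w j ≠ 0} ⊆ Set.range w := by
      intro j hj
      by_contra hnot
      apply hj
      have : ∀ ι : Fin s, (if w ι = j then (1 : ℝ) else 0) = 0 := by
        intro ι
        have : w ι ≠ j := fun h => hnot ⟨ι, h⟩
        simp [this]
      have hz : (∑ ι : Fin s, if w ι = j then (1 : ℝ) else 0) = 0 :=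
        Finset.sum_eq_zero fun ι _ => this ι
      show σ j * (∑ ι : Fin s, if w ι = j then (1 : ℝ) else 0) = 0
      rw [hz, mul_zero]
    calc Set.ncard {j | V w j ≠ 0} ≤ (Set.range w).ncard :=
          Set.ncard_le_ncard hsub (Set.finite_range w)
      _ = ((Set.univ : Set (Fin s)).image w).ncard := by rw [Set.image_univ]
      _ ≤ (Set.univ : Set (Fin s)).ncard := Set.ncard_image_le Set.finite_univ
      _ = s := by simp [Set.ncard_univ]
  -- rewrite X (V w) in terms of coordinates of w
  have hVx : ∀ (i : Fin N) (w : Fin s → Fin p),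
      ∑ j, x i j * V w j = ∑ ι, σ (w ι) * x i (w ι) := by
    intro i w
    have h1 : ∀ j, x i j * V w j = ∑ ι : Fin s, (if w ι = j then σ j * x i j else 0) := by
      intro j
      simp only [hVdef]
      rw [← mul_assoc, Finset.mul_sum]
      exact Finset.sum_congr rfl fun ι _ => by split <;> ring
    simp_rw [h1]
    rw [Finset.sum_comm]
    exact Finset.sum_congr rfl fun ι _ => by rw [Finset.sum_ite_eq]; simp
  have hVsq : ∀ w : Fin s → Fin p,
      ∑ j, (V w j) ^ 2 = ∑ j, (∑ ι, (if w ι = j then (1 : ℝ) else 0)) ^ 2 := by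
    intro w
    refine Finset.sum_congr rfl fun j _ => ?_
    simp only [hVdef]
    rw [mul_pow, hσsq, one_mul]
  -- expected squared norm
  have Enorm : ∑ w : Fin s → Fin p, (∏ a, μ (w a)) * (∑ j, (V w j) ^ 2)
      = s + ((s : ℝ) ^ 2 - s) * ∑ j, θ j ^ 2 := by
    calc ∑ w : Fin s → Fin p, (∏ a, μ (w a)) * (∑ j, (V w j) ^ 2)
        = ∑ w : Fin s → Fin p, ∑ j,
            (∏ a, μ (w a)) * (∑ ι, (if w ι = j then (1 : ℝ) else 0)) ^ 2 := by
          refine Finset.sum_congr rfl fun w _ => ?_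
          rw [hVsq w, Finset.mul_sum]
      _ = ∑ j, ∑ w : Fin s → Fin p,
            (∏ a, μ (w a)) * (∑ ι, (if w ι = j then (1 : ℝ) else 0)) ^ 2 :=
          Finset.sum_comm
      _ = ∑ j, ((s : ℝ) * (∑ m, μ m * (if m = j then (1 : ℝ) else 0) ^ 2)
            + ((s : ℝ) ^ 2 - s) * (∑ m, μ m * (if m = j then (1 : ℝ) else 0)) ^ 2) :=
          Finset.sum_congr rfl fun j _ => master μ hμ1 (fun m => if m = j then (1 : ℝ) else 0)
      _ = ∑ j, ((s : ℝ) * μ j + ((s : ℝ) ^ 2 - s) * μ j ^ 2) := by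
          refine Finset.sum_congr rfl fun j _ => ?_
          congr 1
          · congr 1
            simp [Finset.sum_ite_eq']
          · congr 1
            simp [Finset.sum_ite_eq']
      _ = s + ((s : ℝ) ^ 2 - s) * ∑ j, θ j ^ 2 := by
          rw [Finset.sum_add_distrib, ← Finset.mul_sum, ← Finset.mul_sum, hμ1, mul_one]
          congr 1
          congr 1
          exact Finset.sum_congr rfl fun j _ => by rw [hμdef]; simp [sq_abs]
  -- expected quadratic form
  have EQ : ∑ w : Fin s → Fin p, (∏ a, μ (w a)) * ((N : ℝ)⁻¹ * ∑ i, (∑ j, x i j * V w j) ^ 2)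
      = s * ((N : ℝ)⁻¹ * ∑ i, ∑ j, μ j * (x i j) ^ 2)
        + ((s : ℝ) ^ 2 - s) * ((N : ℝ)⁻¹ * ∑ i, (∑ j, x i j * θ j) ^ 2) := by
    calc ∑ w : Fin s → Fin p, (∏ a, μ (w a)) * ((N : ℝ)⁻¹ * ∑ i, (∑ j, x i j * V w j) ^ 2)
        = (N : ℝ)⁻¹ * ∑ i, ∑ w : Fin s → Fin p,
            (∏ a, μ (w a)) * (∑ ι, σ (w ι) * x i (w ι)) ^ 2 := by
          simp_rw [hVx, Finset.mul_sum]
          rw [Finset.sum_comm]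
          exact Finset.sum_congr rfl fun i _ => Finset.sum_congr rfl fun w _ => by ring
      _ = (N : ℝ)⁻¹ * ∑ i, ((s : ℝ) * (∑ j, μ j * (σ j * x i j) ^ 2)
            + ((s : ℝ) ^ 2 - s) * (∑ j, μ j * (σ j * x i j)) ^ 2) := by
          congr 1
          exact Finset.sum_congr rfl fun i _ => master μ hμ1 (fun j => σ j * x i j)
      _ = (N : ℝ)⁻¹ * ∑ i, ((s : ℝ) * (∑ j, μ j * (x i j) ^ 2)
            + ((s : ℝ) ^ 2 - s) * (∑ j, x i j * θ j) ^ 2) := by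
          congr 1
          refine Finset.sum_congr rfl fun i _ => ?_
          congr 2
          · exact Finset.sum_congr rfl fun j _ => by rw [mul_pow, hσsq, one_mul]
          · congr 1
            exact Finset.sum_congr rfl fun j _ => by rw [← hσμ j]; ring
      _ = s * ((N : ℝ)⁻¹ * ∑ i, ∑ j, μ j * (x i j) ^ 2)
          + ((s : ℝ) ^ 2 - s) * ((N : ℝ)⁻¹ * ∑ i, (∑ j, x i j * θ j) ^ 2) := by
          rw [Finset.sum_add_distrib, mul_add, ← Finset.mul_sum, ← Finset.mul_sum]
          ring
  -- the pointwise inequality, summed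
  have hsum : φ₁ ^ 2 * (s + ((s : ℝ) ^ 2 - s) * ∑ j, θ j ^ 2)
      ≤ s * ((N : ℝ)⁻¹ * ∑ i, ∑ j, μ j * (x i j) ^ 2)
        + ((s : ℝ) ^ 2 - s) * ((N : ℝ)⁻¹ * ∑ i, (∑ j, x i j * θ j) ^ 2) := by
    rw [← Enorm, ← EQ, Finset.mul_sum]
    refine Finset.sum_le_sum fun w _ => ?_
    rw [mul_left_comm]
    exact mul_le_mul_of_nonneg_left (hφ' (V w) (hsupp w)) (hP0 w)
  -- bound the diagonal term by ρ
  have hD : (N : ℝ)⁻¹ * ∑ i, ∑ j, μ j * (x i j) ^ 2 ≤ ρ := by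
    have h1 : (N : ℝ)⁻¹ * ∑ i, ∑ j, μ j * (x i j) ^ 2
        = ∑ j, μ j * ((N : ℝ)⁻¹ * ∑ i, (x i j) ^ 2) := by
      rw [Finset.sum_comm, Finset.mul_sum]
      refine Finset.sum_congr rfl fun j _ => ?_
      simp only [Finset.mul_sum]
      exact Finset.sum_congr rfl fun i _ => by ring
    rw [h1]
    calc ∑ j, μ j * ((N : ℝ)⁻¹ * ∑ i, (x i j) ^ 2) ≤ ∑ j, μ j * ρ :=
          Finset.sum_le_sum fun j _ => mul_le_mul_of_nonneg_left (hρ j) (hμ0 j)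
      _ = ρ := by rw [← Finset.sum_mul, hμ1, one_mul]
  -- conclude
  set T2 := ∑ j, θ j ^ 2 with hT2
  set Q := (N : ℝ)⁻¹ * ∑ i, (∑ j, x i j * θ j) ^ 2 with hQ
  have hs0 : (0 : ℝ) ≤ s := Nat.cast_nonneg s
  have hs2' : (2 : ℝ) ≤ (s : ℝ) := by exact_mod_cast hs2
  have hs1' : (0 : ℝ) < (s : ℝ) - 1 := by linarith
  have hc : (0 : ℝ) < (s : ℝ) ^ 2 - s := by nlinarith
  have final : φ₁ ^ 2 * ((s : ℝ) + ((s : ℝ) ^ 2 - s) * T2) ≤ (s : ℝ) * ρ + ((s : ℝ) ^ 2 - s) * Q := by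
    have := mul_le_mul_of_nonneg_left hD hs0
    linarith [hsum]
  have hcR : ((s : ℝ) ^ 2 - s) * (ρ / ((s : ℝ) - 1)) = (s : ℝ) * ρ := by
    field_simp
  have h4 : ((s : ℝ) ^ 2 - s) * (φ₁ ^ 2 * T2 - ρ / ((s : ℝ) - 1)) ≤ ((s : ℝ) ^ 2 - s) * Q := by
    have hφs : 0 ≤ φ₁ ^ 2 * (s : ℝ) := mul_nonneg (sq_nonneg _) hs0
    nlinarith [final, hcR]
  exact le_of_mul_le_mul_left h4 hc

set_option maxHeartbeats 1000000 in
/-- Deterministic core of the restricted-eigenvalue bound (Lecué–Mendelson /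
Proposition 4.3 of the paper).  If the `s`-sparse minimal singular value of the
design is at least `φ₁ > 0`, then `‖Xθ‖²_{N,2} ≥ φ₁²‖θ‖² − ‖θ‖₁² ρ̂/(s−1)` for all θ,
and consequently the restricted eigenvalue `κ(s₁, c₀)` is at least `φ₁/√2` whenever
`s₁ ≤ (s−1)φ₁²/(2(1+c₀)² ρ̂)`. -/
theorem stmt_13 (N p s : ℕ) (hN : 0 < N) (hp : 0 < p) (hs2 : 2 ≤ s) (hsp : s ≤ p)
    (x : Fin N → Fin p → ℝ) (φ₁ : ℝ) (hφ₁ : 0 < φ₁)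
    (hφ : ∀ θ : Fin p → ℝ, Set.ncard {j | θ j ≠ 0} ≤ s → (∑ j, θ j ^ 2) = 1 →
      φ₁ ≤ Real.sqrt ((N : ℝ)⁻¹ * ∑ i, (∑ j, x i j * θ j) ^ 2)) :
    (∀ θ : Fin p → ℝ,
      φ₁ ^ 2 * (∑ j, θ j ^ 2)
          - (∑ j, |θ j|) ^ 2 * (⨆ ℓ : Fin p, (N : ℝ)⁻¹ * ∑ i, (x i ℓ) ^ 2) / ((s : ℝ) - 1)
        ≤ (N : ℝ)⁻¹ * ∑ i, (∑ j, x i j * θ j) ^ 2) ∧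
    (∀ c₀ : ℝ, 1 ≤ c₀ → ∀ s₁ : ℕ, 0 < s₁ →
      (s₁ : ℝ) ≤ ((s : ℝ) - 1) * φ₁ ^ 2
          / (2 * (1 + c₀) ^ 2 * (⨆ ℓ : Fin p, (N : ℝ)⁻¹ * ∑ i, (x i ℓ) ^ 2)) →
      ∀ J : Finset (Fin p), 1 ≤ J.card → J.card ≤ s₁ →
      ∀ θ : Fin p → ℝ, θ ≠ 0 → (∑ j ∈ Jᶜ, |θ j|) ≤ c₀ * ∑ j ∈ J, |θ j| →
      (φ₁ / Real.sqrt 2) * (∑ j ∈ J, |θ j|)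
        ≤ Real.sqrt (s₁ : ℝ) * Real.sqrt ((N : ℝ)⁻¹ * ∑ i, (∑ j, x i j * θ j) ^ 2)) := by
  classical
  haveI : Nonempty (Fin p) := ⟨⟨0, hp⟩⟩
  set ρ : ℝ := ⨆ ℓ : Fin p, (N : ℝ)⁻¹ * ∑ i, (x i ℓ) ^ 2 with hρdef
  have hbdd : BddAbove (Set.range fun ℓ : Fin p => (N : ℝ)⁻¹ * ∑ i, (x i ℓ) ^ 2) :=
    (Set.finite_range _).bddAbove
  have hρ : ∀ j : Fin p, (N : ℝ)⁻¹ * ∑ i, (x i j) ^ 2 ≤ ρ := fun j => le_ciSup hbdd j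
  have hρ0 : 0 ≤ ρ := le_trans (by positivity) (hρ ⟨0, hp⟩)
  -- homogeneous form of the sparse eigenvalue hypothesis
  have hφ' : ∀ v : Fin p → ℝ, Set.ncard {j | v j ≠ 0} ≤ s →
      φ₁ ^ 2 * (∑ j, v j ^ 2) ≤ (N : ℝ)⁻¹ * ∑ i, (∑ j, x i j * v j) ^ 2 := by
    intro v hv
    by_cases h0 : ∑ j, v j ^ 2 = 0
    · rw [h0, mul_zero]
      positivity
    · have ht : 0 < ∑ j, v j ^ 2 :=
        lt_of_le_of_ne (Finset.sum_nonneg fun j _ => sq_nonneg _) (Ne.symm h0)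
      set r := Real.sqrt (∑ j, v j ^ 2) with hrdef
      have hr : 0 < r := Real.sqrt_pos.mpr ht
      have hr2 : r ^ 2 = ∑ j, v j ^ 2 := Real.sq_sqrt ht.le
      have hu2 : ∑ j, (r⁻¹ * v j) ^ 2 = 1 := by
        simp_rw [mul_pow]
        rw [← Finset.mul_sum, ← hr2]
        field_simp
      have husupp : {j | r⁻¹ * v j ≠ 0} = {j | v j ≠ 0} := by
        ext j
        simp [mul_eq_zero, inv_eq_zero, hr.ne']
      have hkey := hφ (fun j => r⁻¹ * v j) (by rw [husupp]; exact hv) hu2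
      have hi : ∀ i, ∑ j, x i j * (r⁻¹ * v j) = r⁻¹ * ∑ j, x i j * v j := fun i => by
        rw [Finset.mul_sum]; exact Finset.sum_congr rfl fun j _ => by ring
      have he : (N : ℝ)⁻¹ * ∑ i, (∑ j, x i j * (r⁻¹ * v j)) ^ 2
          = r⁻¹ ^ 2 * ((N : ℝ)⁻¹ * ∑ i, (∑ j, x i j * v j) ^ 2) := by
        simp_rw [hi, mul_pow]
        rw [← Finset.mul_sum]
        ring
      rw [he] at hkey
      have hQ0 : 0 ≤ (N : ℝ)⁻¹ * ∑ i, (∑ j, x i j * v j) ^ 2 := by positivity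
      have hsq : Real.sqrt (r⁻¹ ^ 2 * ((N : ℝ)⁻¹ * ∑ i, (∑ j, x i j * v j) ^ 2))
          = r⁻¹ * Real.sqrt ((N : ℝ)⁻¹ * ∑ i, (∑ j, x i j * v j) ^ 2) := by
        rw [Real.sqrt_mul (sq_nonneg _), Real.sqrt_sq (inv_nonneg.mpr hr.le)]
      rw [hsq] at hkey
      have h2 : φ₁ * r ≤ Real.sqrt ((N : ℝ)⁻¹ * ∑ i, (∑ j, x i j * v j) ^ 2) := by
        have h := mul_le_mul_of_nonneg_right hkey hr.le
        calc φ₁ * r ≤ r⁻¹ * Real.sqrt ((N : ℝ)⁻¹ * ∑ i, (∑ j, x i j * v j) ^ 2) * r := h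
          _ = Real.sqrt ((N : ℝ)⁻¹ * ∑ i, (∑ j, x i j * v j) ^ 2) := by
              field_simp
      have h3 := mul_self_le_mul_self (by positivity) h2
      rw [Real.mul_self_sqrt hQ0] at h3
      nlinarith [h3, hr2]
  -- Part 1
  have part1 : ∀ θ : Fin p → ℝ,
      φ₁ ^ 2 * (∑ j, θ j ^ 2) - (∑ j, |θ j|) ^ 2 * ρ / ((s : ℝ) - 1)
        ≤ (N : ℝ)⁻¹ * ∑ i, (∑ j, x i j * θ j) ^ 2 := by
    intro θ
    by_cases h0 : ∑ j, |θ j| = 0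
    · have hz : ∀ j, θ j = 0 := fun j =>
        abs_eq_zero.mp ((Finset.sum_eq_zero_iff_of_nonneg
          (fun j _ => abs_nonneg _)).mp h0 j (Finset.mem_univ j))
      simp [hz]
    · set c := ∑ j, |θ j| with hcdef
      have hc : 0 < c :=
        lt_of_le_of_ne (Finset.sum_nonneg fun j _ => abs_nonneg _) (Ne.symm h0)
      have hnorm : ∑ j, |c⁻¹ * θ j| = 1 := by
        simp_rw [abs_mul, abs_inv, abs_of_pos hc]
        rw [← Finset.mul_sum, ← hcdef]
        field_simp
      have key := part1_norm hs2 x φ₁ ρ hρ hφ' hφ₁.le (fun j => c⁻¹ * θ j) hnorm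
      have e1 : ∑ j, (c⁻¹ * θ j) ^ 2 = c⁻¹ ^ 2 * ∑ j, θ j ^ 2 := by
        simp_rw [mul_pow]
        rw [Finset.mul_sum]
      have e2 : (N : ℝ)⁻¹ * ∑ i, (∑ j, x i j * (c⁻¹ * θ j)) ^ 2
          = c⁻¹ ^ 2 * ((N : ℝ)⁻¹ * ∑ i, (∑ j, x i j * θ j) ^ 2) := by
        have hi : ∀ i, ∑ j, x i j * (c⁻¹ * θ j) = c⁻¹ * ∑ j, x i j * θ j := fun i => by
          rw [Finset.mul_sum]; exact Finset.sum_congr rfl fun j _ => by ring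
        simp_rw [hi, mul_pow]
        rw [← Finset.mul_sum]
        ring
      rw [e1, e2] at key
      have hmul := mul_le_mul_of_nonneg_left key (sq_nonneg c)
      rw [mul_sub] at hmul
      have hcc : c * c⁻¹ = 1 := mul_inv_cancel₀ hc.ne'
      have g1 : c ^ 2 * (φ₁ ^ 2 * (c⁻¹ ^ 2 * ∑ j, θ j ^ 2)) = φ₁ ^ 2 * ∑ j, θ j ^ 2 := by
        rw [show c ^ 2 * (φ₁ ^ 2 * (c⁻¹ ^ 2 * ∑ j, θ j ^ 2))
            = (c * c⁻¹) ^ 2 * (φ₁ ^ 2 * ∑ j, θ j ^ 2) from by ring, hcc, one_pow, one_mul]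
      have g2 : c ^ 2 * (c⁻¹ ^ 2 * ((N : ℝ)⁻¹ * ∑ i, (∑ j, x i j * θ j) ^ 2))
          = (N : ℝ)⁻¹ * ∑ i, (∑ j, x i j * θ j) ^ 2 := by
        rw [show c ^ 2 * (c⁻¹ ^ 2 * ((N : ℝ)⁻¹ * ∑ i, (∑ j, x i j * θ j) ^ 2))
            = (c * c⁻¹) ^ 2 * ((N : ℝ)⁻¹ * ∑ i, (∑ j, x i j * θ j) ^ 2) from by ring,
          hcc, one_pow, one_mul]
      have g3 : c ^ 2 * (ρ / ((s : ℝ) - 1)) = c ^ 2 * ρ / ((s : ℝ) - 1) := by ring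
      rw [g1, g2, g3] at hmul
      exact hmul
  refine ⟨part1, ?_⟩
  -- Part 2
  intro c₀ hc₀ s₁ hs₁pos hs₁ J hJ1 hJs₁ θ hθne hcone
  have hs2' : (2 : ℝ) ≤ (s : ℝ) := by exact_mod_cast hs2
  have hs1' : (0 : ℝ) < (s : ℝ) - 1 := by linarith
  have hc₀1 : (0 : ℝ) < 1 + c₀ := by linarith
  have hρpos : 0 < ρ := by
    rcases hρ0.lt_or_eq with h | h
    · exact h
    · exfalso
      rw [← h] at hs₁
      simp at hs₁
      have : (0 : ℝ) < (s₁ : ℝ) := by exact_mod_cast hs₁pos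
      linarith
  have hBpos : 0 < 2 * (1 + c₀) ^ 2 * ρ := by positivity
  have hs₁B : (s₁ : ℝ) * (2 * (1 + c₀) ^ 2 * ρ) ≤ ((s : ℝ) - 1) * φ₁ ^ 2 :=
    (le_div_iff₀ hBpos).mp hs₁
  set T2 := ∑ j, θ j ^ 2 with hT2def
  set Q := (N : ℝ)⁻¹ * ∑ i, (∑ j, x i j * θ j) ^ 2 with hQdef
  set SJ := ∑ j ∈ J, |θ j| with hSJdef
  have hT2 : 0 ≤ T2 := Finset.sum_nonneg fun j _ => sq_nonneg _
  have hSJ0 : 0 ≤ SJ := Finset.sum_nonneg fun j _ => abs_nonneg _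
  have hCS : SJ ^ 2 ≤ (s₁ : ℝ) * T2 := by
    have h1 : SJ ^ 2 ≤ (J.card : ℝ) * ∑ j ∈ J, θ j ^ 2 := by
      have := Finset.sum_mul_sq_le_sq_mul_sq J (fun _ => (1 : ℝ)) (fun j => |θ j|)
      simpa [sq_abs] using this
    have h2 : ∑ j ∈ J, θ j ^ 2 ≤ T2 :=
      Finset.sum_le_sum_of_subset_of_nonneg (Finset.subset_univ J) fun j _ _ => sq_nonneg _
    have h3 : (J.card : ℝ) ≤ (s₁ : ℝ) := by exact_mod_cast hJs₁
    calc SJ ^ 2 ≤ (J.card : ℝ) * ∑ j ∈ J, θ j ^ 2 := h1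
      _ ≤ (s₁ : ℝ) * T2 := by
          apply mul_le_mul h3 h2 (Finset.sum_nonneg fun j _ => sq_nonneg _) (by positivity)
  have hT1 : ∑ j, |θ j| ≤ (1 + c₀) * SJ := by
    rw [← Finset.sum_add_sum_compl J fun j => |θ j|]
    have : (1 + c₀) * SJ = SJ + c₀ * SJ := by ring
    rw [this]
    exact add_le_add le_rfl hcone
  have hT1sq : (∑ j, |θ j|) ^ 2 ≤ (1 + c₀) ^ 2 * SJ ^ 2 := by
    have h0 : 0 ≤ ∑ j, |θ j| := Finset.sum_nonneg fun j _ => abs_nonneg _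
    nlinarith [hT1, h0]
  have hstep : (∑ j, |θ j|) ^ 2 * ρ / ((s : ℝ) - 1) ≤ φ₁ ^ 2 * T2 / 2 := by
    rw [div_le_div_iff₀ hs1' two_pos]
    have hint1 := mul_le_mul_of_nonneg_right hT1sq hρ0
    have hint2 := mul_le_mul_of_nonneg_left hCS (by positivity : (0:ℝ) ≤ (1 + c₀) ^ 2 * ρ)
    have hint3 := mul_le_mul_of_nonneg_right hs₁B hT2
    nlinarith [hint1, hint2, hint3, hρ0, hT2]
  have hQhalf : φ₁ ^ 2 / 2 * T2 ≤ Q := by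
    have := part1 θ
    rw [← hT2def, ← hQdef] at this
    linarith [this, hstep]
  have hQ0 : 0 ≤ Q := by rw [hQdef]; positivity
  have g1 : SJ ≤ Real.sqrt ((s₁ : ℝ) * T2) :=
    calc SJ = Real.sqrt (SJ ^ 2) := (Real.sqrt_sq hSJ0).symm
      _ ≤ Real.sqrt ((s₁ : ℝ) * T2) := Real.sqrt_le_sqrt hCS
  have g2 : Real.sqrt ((s₁ : ℝ) * T2) = Real.sqrt (s₁ : ℝ) * Real.sqrt T2 :=
    Real.sqrt_mul (Nat.cast_nonneg _) _
  have g3 : φ₁ / Real.sqrt 2 * Real.sqrt T2 ≤ Real.sqrt Q := by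
    have hrw : φ₁ / Real.sqrt 2 * Real.sqrt T2 = Real.sqrt (φ₁ ^ 2 / 2 * T2) := by
      rw [Real.sqrt_mul (by positivity), Real.sqrt_div (sq_nonneg φ₁),
        Real.sqrt_sq hφ₁.le]
    rw [hrw]
    exact Real.sqrt_le_sqrt hQhalf
  have hφ2 : 0 ≤ φ₁ / Real.sqrt 2 := by positivity
  calc (φ₁ / Real.sqrt 2) * SJ
      ≤ (φ₁ / Real.sqrt 2) * (Real.sqrt (s₁ : ℝ) * Real.sqrt T2) := by
        apply mul_le_mul_of_nonneg_left _ hφ2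
        rw [← g2]; exact g1
    _ = Real.sqrt (s₁ : ℝ) * (φ₁ / Real.sqrt 2 * Real.sqrt T2) := by ring
    _ ≤ Real.sqrt (s₁ : ℝ) * Real.sqrt Q :=
        mul_le_mul_of_nonneg_left g3 (Real.sqrt_nonneg _)
end
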